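/- Let S be a nonempty set, f : S → ℂ, and C₁, C₂ ∈ ℂ such that f(z) = C₁·conj(f(z)) + C₂ for all z ∈ S. Then: (i) if |C₁| ≠ 1, f is constant on S, equal to (C₁·conj(C₂) + C₂)/(1 − |C₁|²); (ii) if |C₁| = 1, there exist real numbers u, v, c with (u,v) ≠ (0,0) such that u·Re(f(z)) + v·Im(f(z)) = c for all z ∈ S, i.e. the image of f lies on a real-affine line in ℂ. -/

import Mathlib

open Complex

theorem functional_equation_dichotomy {S : Type*} [Nonempty S] (f : S → ℂ) (C₁ C₂ : ℂ)
    (h : ∀ z : S, f z = C₁ * (starRingEnd ℂ) (f z) + C₂) :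
    (‖C₁‖ ≠ 1 →
      ∀ z : S, f z = (C₁ * (starRingEnd ℂ) C₂ + C₂) / (1 - ((‖C₁‖ : ℝ) : ℂ) ^ 2)) ∧
    (‖C₁‖ = 1 →
      ∃ u v c : ℝ, (u, v) ≠ (0, 0) ∧ ∀ z : S, u * (f z).re + v * (f z).im = c) := by
  constructor
  · intro hC z
    have habs : ((‖C₁‖ : ℝ) : ℂ) ^ 2 = C₁ * (starRingEnd ℂ) C₁ := by
      rw [Complex.mul_conj, ← Complex.sq_norm]
      push_cast
      ring
    have hne : (1 - ((‖C₁‖ : ℝ) : ℂ) ^ 2) ≠ 0 := by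
      intro hh
      apply hC
      have : ((‖C₁‖ : ℝ) : ℂ) ^ 2 = 1 := by linear_combination -hh
      have h2 : ‖C₁‖ ^ 2 = 1 := by exact_mod_cast this
      nlinarith [norm_nonneg C₁]
    have h1 := h z
    have h2 : (starRingEnd ℂ) (f z) = (starRingEnd ℂ) C₁ * f z + (starRingEnd ℂ) C₂ := by
      conv_lhs => rw [h1]
      simp [map_add, map_mul, mul_comm]
    rw [eq_div_iff hne]
    rw [h2] at h1
    rw [habs]
    linear_combination h1
  · intro hC
    by_cases hC1 : C₁ = 1
    · refine ⟨0, 2, C₂.im, by simp, fun z => ?_⟩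
      have := congrArg Complex.im (h z)
      simp [hC1] at this
      linarith
    · refine ⟨1 - C₁.re, -C₁.im, C₂.re, ?_, fun z => ?_⟩
      · intro hh
        apply hC1
        rw [Prod.ext_iff] at hh
        have h1 : C₁.re = 1 := by have := hh.1; simp at this; linarith
        have h2 : C₁.im = 0 := by have := hh.2; simpa using this
        exact Complex.ext (by simp [h1]) (by simp [h2])
      · have := congrArg Complex.re (h z)
        simp [Complex.add_re, Complex.mul_re] at this
        ring_nf
        ring_nf at this
        linarith
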